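/- Let α > n, x₀ ∈ ℝⁿ, R > 0, and f_ε(x) = (ε/(ε²+|x−x₀|²))^{(n+α)/2}. Then there exists C₀ > 0 independent of ε such that for all small ε > 0, ∫_{B_R(x₀)} ∫_{B_R(x₀)} |x−y|^{α−n+1} f_ε(x) f_ε(y) dx dy ≥ C₀ ε. -/

import Mathlib

set_option maxHeartbeats 1000000

open MeasureTheory Metric

theorem stmt_9 (n : ℕ) (hn : 0 < n) (α : ℝ) (hα : (n : ℝ) < α)
    (x₀ : EuclideanSpace ℝ (Fin n)) (R : ℝ) (hR : 0 < R) :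
    ∃ C₀ > (0 : ℝ), ∃ ε₀ > (0 : ℝ), ∀ ε : ℝ, 0 < ε → ε < ε₀ →
      C₀ * ε ≤ ∫ x in Metric.ball x₀ R, ∫ y in Metric.ball x₀ R,
        ‖x - y‖ ^ (α - (n : ℝ) + 1) *
          ((ε / (ε ^ 2 + ‖x - x₀‖ ^ 2)) ^ (((n : ℝ) + α) / 2)) *
          ((ε / (ε ^ 2 + ‖y - x₀‖ ^ 2)) ^ (((n : ℝ) + α) / 2)) := by
  have hn1 : (1:ℝ) ≤ (n:ℝ) := by exact_mod_cast hn
  have hexp : (0:ℝ) ≤ α - n + 1 := by linarith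
  have hs : (0:ℝ) ≤ ((n:ℝ) + α) / 2 := by linarith
  set v : ℝ := (volume (ball (0 : EuclideanSpace ℝ (Fin n)) 1)).toReal with hvdef
  have hv0 : 0 < v :=
    ENNReal.toReal_pos (measure_ball_pos volume 0 one_pos).ne' measure_ball_lt_top.ne
  refine ⟨(4:ℝ) ^ (α - (n:ℝ) + 1) * (17:ℝ) ^ (-((n:ℝ) + α)) * v ^ 2, by positivity,
    R/5, by positivity, ?_⟩
  intro ε hε hεR
  -- unit vector
  set e : EuclideanSpace ℝ (Fin n) := EuclideanSpace.single ⟨0, hn⟩ (1:ℝ) with he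
  have hne : ‖e‖ = 1 := by simp [he]
  have hent : e ≠ 0 := by intro h; rw [h] at hne; simp at hne
  haveI : Nontrivial (EuclideanSpace ℝ (Fin n)) := nontrivial_of_ne e 0 hent
  set p := x₀ + (3*ε) • e with hp
  set q := x₀ - (3*ε) • e with hq
  set A := ball p ε with hA
  set B := ball q ε with hB
  have hApt : ∀ x ∈ A, ‖x - x₀‖ < 4*ε := by
    intro x hx
    have h1 : ‖x - p‖ < ε := by
      simpa [A, dist_eq_norm] using hx
    have h2 : x - x₀ = (x - p) + (3*ε) • e := by rw [hp]; abel
    calc ‖x - x₀‖ ≤ ‖x - p‖ + ‖(3*ε) • e‖ := by rw [h2]; exact norm_add_le _ _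
      _ < ε + 3*ε := by
          rw [norm_smul, hne, mul_one, Real.norm_eq_abs, abs_of_pos (by linarith)]
          linarith
      _ = 4*ε := by ring
  have hBpt : ∀ y ∈ B, ‖y - x₀‖ < 4*ε := by
    intro y hy
    have h1 : ‖y - q‖ < ε := by
      simpa [B, dist_eq_norm] using hy
    have h2 : y - x₀ = (y - q) + (-(3*ε)) • e := by rw [hq]; simp; abel
    calc ‖y - x₀‖ ≤ ‖y - q‖ + ‖(-(3*ε)) • e‖ := by rw [h2]; exact norm_add_le _ _
      _ < ε + 3*ε := by
          rw [norm_smul, hne, mul_one, Real.norm_eq_abs, abs_neg, abs_of_pos (by linarith)]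
          linarith
      _ = 4*ε := by ring
  have hAsub : A ⊆ ball x₀ R := by
    intro x hx
    have := hApt x hx
    simp only [mem_ball, dist_eq_norm]
    calc ‖x - x₀‖ < 4*ε := this
      _ < R := by linarith
  have hBsub : B ⊆ ball x₀ R := by
    intro y hy
    have := hBpt y hy
    simp only [mem_ball, dist_eq_norm]
    calc ‖y - x₀‖ < 4*ε := this
      _ < R := by linarith
  have hdist : ∀ x ∈ A, ∀ y ∈ B, 4*ε < ‖x - y‖ := by
    intro x hx y hy
    have h1 : ‖x - p‖ < ε := by simpa [A, dist_eq_norm] using hx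
    have h2 : ‖y - q‖ < ε := by simpa [B, dist_eq_norm] using hy
    have hpq : ‖p - q‖ = 6*ε := by
      have : p - q = (6*ε) • e := by
        rw [hp, hq]
        rw [show (6*ε) • e = (3*ε) • e + (3*ε) • e by rw [← add_smul]; ring_nf]
        abel
      rw [this, norm_smul, hne, mul_one, Real.norm_eq_abs, abs_of_pos (by linarith)]
    have h3 : p - q = (p - x) + (x - y) + (y - q) := by abel
    have h4 : ‖p - q‖ ≤ ‖p - x‖ + ‖x - y‖ + ‖y - q‖ := by
      rw [h3]; exact norm_add₃_le
    rw [hpq, norm_sub_rev p x] at h4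
    linarith
  -- the integrand
  set g : EuclideanSpace ℝ (Fin n) → EuclideanSpace ℝ (Fin n) → ℝ := fun x y =>
    ‖x - y‖ ^ (α - (n : ℝ) + 1) *
      ((ε / (ε ^ 2 + ‖x - x₀‖ ^ 2)) ^ (((n : ℝ) + α) / 2)) *
      ((ε / (ε ^ 2 + ‖y - x₀‖ ^ 2)) ^ (((n : ℝ) + α) / 2)) with hg
  have hg0 : ∀ x y, 0 ≤ g x y := by
    intro x y
    have := Real.rpow_nonneg (norm_nonneg (x - y)) (α - (n:ℝ) + 1)
    have h1 : (0:ℝ) ≤ (ε / (ε ^ 2 + ‖x - x₀‖ ^ 2)) ^ (((n : ℝ) + α) / 2) :=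
      Real.rpow_nonneg (by positivity) _
    have h2 : (0:ℝ) ≤ (ε / (ε ^ 2 + ‖y - x₀‖ ^ 2)) ^ (((n : ℝ) + α) / 2) :=
      Real.rpow_nonneg (by positivity) _
    positivity
  -- continuity
  have hfac : Continuous fun w : EuclideanSpace ℝ (Fin n) =>
      (ε / (ε ^ 2 + ‖w - x₀‖ ^ 2)) ^ (((n : ℝ) + α) / 2) := by
    apply Continuous.rpow_const
    · exact continuous_const.div
        (continuous_const.add (((continuous_id.sub continuous_const)).norm.pow 2))
        (fun w => by positivity)
    · exact fun w => Or.inr hs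
  have hcont : Continuous (fun z : EuclideanSpace ℝ (Fin n) × EuclideanSpace ℝ (Fin n) =>
      g z.1 z.2) := by
    have h1 : Continuous fun z : EuclideanSpace ℝ (Fin n) × EuclideanSpace ℝ (Fin n) =>
        ‖z.1 - z.2‖ ^ (α - (n:ℝ) + 1) :=
      (continuous_fst.sub continuous_snd).norm.rpow_const (fun z => Or.inr hexp)
    exact (h1.mul (hfac.comp continuous_fst)).mul (hfac.comp continuous_snd)
  -- integrability on the product
  have hintProd : IntegrableOn (fun z : EuclideanSpace ℝ (Fin n) × EuclideanSpace ℝ (Fin n) =>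
      g z.1 z.2) (ball x₀ R ×ˢ ball x₀ R) (volume.prod volume) :=
    (hcont.continuousOn.integrableOn_compact
      ((isCompact_closedBall x₀ R).prod (isCompact_closedBall x₀ R))).mono_set
      (Set.prod_mono ball_subset_closedBall ball_subset_closedBall)
  have hIntegh : IntegrableOn (fun x => ∫ y in ball x₀ R, g x y) (ball x₀ R) volume := by
    have h := hintProd
    rw [IntegrableOn, ← Measure.prod_restrict] at h
    exact h.integral_prod_left
  -- per-x integrability
  have hintx : ∀ x, IntegrableOn (fun y => g x y) (ball x₀ R) volume := by
    intro x
    have hc : Continuous fun y => g x y := by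
      simp only [hg]
      exact (((continuous_const.sub continuous_id).norm.rpow_const
        (fun z => Or.inr hexp)).mul continuous_const).mul hfac
    exact (hc.continuousOn.integrableOn_compact (isCompact_closedBall x₀ R)).mono_set
      ball_subset_closedBall
  -- pointwise lower bound on A × B
  set K : ℝ := (4*ε) ^ (α - (n:ℝ) + 1) * (1/(17*ε)) ^ (((n:ℝ)+α)/2) *
      (1/(17*ε)) ^ (((n:ℝ)+α)/2) with hK
  have hfaclb : ∀ w : EuclideanSpace ℝ (Fin n), ‖w - x₀‖ < 4*ε →
      (1/(17*ε)) ^ (((n:ℝ)+α)/2) ≤ (ε / (ε ^ 2 + ‖w - x₀‖ ^ 2)) ^ (((n : ℝ) + α) / 2) := by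
    intro w hw
    apply Real.rpow_le_rpow (by positivity) _ hs
    have hd : ε ^ 2 + ‖w - x₀‖ ^ 2 ≤ 17 * ε^2 := by
      have : ‖w - x₀‖^2 ≤ (4*ε)^2 := pow_le_pow_left₀ (norm_nonneg _) hw.le 2
      nlinarith
    have h0 : (0:ℝ) < ε ^ 2 + ‖w - x₀‖ ^ 2 := by positivity
    calc (1:ℝ)/(17*ε) = ε / (17 * ε^2) := by field_simp
      _ ≤ ε / (ε ^ 2 + ‖w - x₀‖ ^ 2) := div_le_div_of_nonneg_left hε.le h0 hd
  have hpt : ∀ x ∈ A, ∀ y ∈ B, K ≤ g x y := by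
    intro x hx y hy
    have h1 : (4*ε) ^ (α - (n:ℝ) + 1) ≤ ‖x - y‖ ^ (α - (n:ℝ) + 1) :=
      Real.rpow_le_rpow (by positivity) (hdist x hx y hy).le hexp
    have h2 := hfaclb x (hApt x hx)
    have h3 := hfaclb y (hBpt y hy)
    have c0 : (0:ℝ) ≤ (1/(17*ε)) ^ (((n:ℝ)+α)/2) := Real.rpow_nonneg (by positivity) _
    have X0 : (0:ℝ) ≤ (4*ε) ^ (α - (n:ℝ) + 1) := Real.rpow_nonneg (by positivity) _
    have XF0 : (0:ℝ) ≤ ‖x - y‖ ^ (α - (n:ℝ) + 1) *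
        (ε / (ε ^ 2 + ‖x - x₀‖ ^ 2)) ^ (((n : ℝ) + α) / 2) := by
      have := Real.rpow_nonneg (norm_nonneg (x-y)) (α - (n:ℝ) + 1)
      have h2' : (0:ℝ) ≤ (ε / (ε ^ 2 + ‖x - x₀‖ ^ 2)) ^ (((n : ℝ) + α) / 2) :=
        Real.rpow_nonneg (by positivity) _
      positivity
    rw [hK, hg]
    exact mul_le_mul (mul_le_mul h1 h2 c0 (le_trans X0 h1)) h3 c0 XF0
  -- volumes
  have hvol : ∀ c : EuclideanSpace ℝ (Fin n), (volume (ball c ε)).toReal = ε^n * v := by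
    intro c
    rw [Measure.addHaar_ball volume c hε.le, ENNReal.toReal_mul,
      ENNReal.toReal_ofReal (by positivity), finrank_euclideanSpace_fin]
  -- inner bound
  have inner : ∀ x ∈ A, K * (ε^n * v) ≤ ∫ y in ball x₀ R, g x y := by
    intro x hx
    have h1 : K * (volume B).toReal ≤ ∫ y in B, g x y :=
      setIntegral_ge_of_const_le_real measurableSet_ball measure_ball_lt_top.ne
        (fun y hy => hpt x hx y hy) ((hintx x).mono_set hBsub)
    have h2 : ∫ y in B, g x y ≤ ∫ y in ball x₀ R, g x y :=
      setIntegral_mono_set (hintx x) (Filter.Eventually.of_forall (fun y => hg0 x y))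
        (HasSubset.Subset.eventuallyLE hBsub)
    rw [hB, hvol q] at h1
    linarith
  -- outer bound
  have outer1 : (K * (ε^n * v)) * (ε^n * v) ≤ ∫ x in A, ∫ y in ball x₀ R, g x y := by
    have := setIntegral_ge_of_const_le_real (μ := volume) measurableSet_ball
      (measure_ball_lt_top (x := p) (r := ε)).ne inner (hIntegh.mono_set hAsub)
    change _ * (volume (ball p ε)).toReal ≤ _ at this
    rwa [hvol p] at this
  have outer2 : ∫ x in A, (∫ y in ball x₀ R, g x y) ≤
      ∫ x in ball x₀ R, ∫ y in ball x₀ R, g x y :=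
    setIntegral_mono_set hIntegh
      (Filter.Eventually.of_forall (fun x => integral_nonneg (fun y => hg0 x y)))
      (HasSubset.Subset.eventuallyLE hAsub)
  -- arithmetic
  have harith : (K * (ε^n * v)) * (ε^n * v) =
      (4:ℝ) ^ (α - (n:ℝ) + 1) * (17:ℝ) ^ (-((n:ℝ) + α)) * v ^ 2 * ε := by
    have e1 : ((1:ℝ)/(17*ε)) ^ (((n:ℝ)+α)/2) * (1/(17*ε)) ^ (((n:ℝ)+α)/2)
        = (17:ℝ)^(-((n:ℝ)+α)) * ε^(-((n:ℝ)+α)) := by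
      rw [← Real.rpow_add (by positivity), show ((n:ℝ)+α)/2 + ((n:ℝ)+α)/2 = (n:ℝ)+α by ring,
        one_div, Real.inv_rpow (by positivity), ← Real.rpow_neg (by positivity),
        Real.mul_rpow (by norm_num) hε.le]
    have e2 : (4*ε:ℝ) ^ (α - (n:ℝ) + 1) = 4 ^ (α - (n:ℝ) + 1) * ε ^ (α - (n:ℝ) + 1) :=
      Real.mul_rpow (by norm_num) hε.le
    have e3 : (ε:ℝ)^n = ε ^ ((n:ℕ):ℝ) := (Real.rpow_natCast ε n).symm
    have e4 : ε ^ (α - (n:ℝ) + 1) * ε ^ (-((n:ℝ)+α)) * ε ^ ((n:ℕ):ℝ) * ε ^ ((n:ℕ):ℝ) = ε := by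
      rw [← Real.rpow_add hε, ← Real.rpow_add hε, ← Real.rpow_add hε,
        show α - (n:ℝ) + 1 + -((n:ℝ)+α) + ((n:ℕ):ℝ) + ((n:ℕ):ℝ) = 1 by ring,
        Real.rpow_one]
    rw [hK]
    calc (4*ε) ^ (α - (n:ℝ) + 1) * (1/(17*ε)) ^ (((n:ℝ)+α)/2) * (1/(17*ε)) ^ (((n:ℝ)+α)/2) *
          (ε^n * v) * (ε^n * v)
        = (4*ε) ^ (α - (n:ℝ) + 1) * ((1/(17*ε)) ^ (((n:ℝ)+α)/2) * (1/(17*ε)) ^ (((n:ℝ)+α)/2)) *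
          (ε^n * v) * (ε^n * v) := by ring
      _ = (4 ^ (α - (n:ℝ) + 1) * ε ^ (α - (n:ℝ) + 1)) *
          ((17:ℝ)^(-((n:ℝ)+α)) * ε^(-((n:ℝ)+α))) *
          (ε ^ ((n:ℕ):ℝ) * v) * (ε ^ ((n:ℕ):ℝ) * v) := by rw [e1, e2, e3]
      _ = 4 ^ (α - (n:ℝ) + 1) * (17:ℝ)^(-((n:ℝ)+α)) * v^2 *
          (ε ^ (α - (n:ℝ) + 1) * ε ^ (-((n:ℝ)+α)) * ε ^ ((n:ℕ):ℝ) * ε ^ ((n:ℕ):ℝ)) := by ring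
      _ = _ := by rw [e4]
  show (4:ℝ) ^ (α - (n:ℝ) + 1) * (17:ℝ) ^ (-((n:ℝ) + α)) * v ^ 2 * ε ≤
      ∫ x in ball x₀ R, ∫ y in ball x₀ R, g x y
  calc (4:ℝ) ^ (α - (n:ℝ) + 1) * (17:ℝ) ^ (-((n:ℝ) + α)) * v ^ 2 * ε
      = (K * (ε^n * v)) * (ε^n * v) := harith.symm
    _ ≤ ∫ x in A, ∫ y in ball x₀ R, g x y := outer1
    _ ≤ ∫ x in ball x₀ R, ∫ y in ball x₀ R, g x y := outer2
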